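/- arXiv:1704.02019 — 6 statements merged into one kernel-verified Lean document; each statement's English description precedes it below -/
import Mathlib

section
/- Let W be a symmetric real N×N matrix with zero diagonal, b ∈ ℝ^N, and define the Hopfield energy of a state x ∈ {0,1}^N by E(x) = −(1/2)·∑_{i≠j} W_{ij} x_i x_j − ∑_i b_i x_i. Fix a node i and let x' agree with x on all coordinates except possibly i, where x'_i = 1 if ∑_j W_{ij} x_j + b_i > 0 and x'_i = 0 if ∑_j W_{ij} x_j + b_i < 0 (and x'_i arbitrary if ∑_j W_{ij} x_j + b_i = 0). Then E(x') ≤ E(x), i.e., an asynchronous Hopfield update never increases the energy. -/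
open Finset

/-- **Asynchronous Hopfield updates never increase the energy.**
Let `W` be a symmetric real `N × N` matrix with zero diagonal, `b ∈ ℝ^N`, and
define the Hopfield energy of a state `x ∈ {0,1}^N` by
`E(x) = -(1/2) ∑_{i ≠ j} W i j * x i * x j - ∑ i, b i * x i`.
Fix a node `i` and let `x'` agree with `x` on all coordinates except possibly
`i`, where `x' i = 1` if `∑ j, W i j * x j + b i > 0` and `x' i = 0` if
`∑ j, W i j * x j + b i < 0` (arbitrary in `{0,1}` when the input is `0`).
Then `E(x') ≤ E(x)`. -/
theorem hopfield_update_energy_nonincreasing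
    {N : ℕ} (W : Matrix (Fin N) (Fin N) ℝ) (b : Fin N → ℝ)
    (hsymm : ∀ i j, W i j = W j i) (hdiag : ∀ i, W i i = 0)
    (x x' : Fin N → ℝ)
    (hx : ∀ j, x j = 0 ∨ x j = 1) (hx' : ∀ j, x' j = 0 ∨ x' j = 1)
    (i : Fin N)
    (hagree : ∀ j, j ≠ i → x' j = x j)
    (hpos : (∑ j, W i j * x j) + b i > 0 → x' i = 1)
    (hneg : (∑ j, W i j * x j) + b i < 0 → x' i = 0) :
    (-(1/2) * ∑ k, ∑ j ∈ Finset.univ.erase k, W k j * x' k * x' j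
        - ∑ k, b k * x' k) ≤
      (-(1/2) * ∑ k, ∑ j ∈ Finset.univ.erase k, W k j * x k * x j
        - ∑ k, b k * x k) := by
  set d : ℝ := x' i - x i with hd
  set L₀ : ℝ := ∑ j, W i j * x j with hL0
  -- convert erase-sums to full sums using zero diagonal
  have hS : ∀ y : Fin N → ℝ,
      (∑ k, ∑ j ∈ Finset.univ.erase k, W k j * y k * y j)
        = ∑ k, ∑ j, W k j * y k * y j := by
    intro y
    refine Finset.sum_congr rfl fun k _ => ?_
    rw [Finset.sum_erase]
    simp [hdiag k]
  have hx'eq : ∀ j, x' j = x j + d * (if j = i then 1 else 0) := by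
    intro j
    by_cases h : j = i
    · subst h; simp [hd]
    · simp [h, hagree j h]
  have hterm : ∀ k j, W k j * x' k * x' j
      = W k j * x k * x j + (if j = i then W k i * x k * d else 0)
        + (if k = i then W i j * d * x j else 0)
        + (if k = i then (if j = i then W i i * d * d else 0) else 0) := by
    intro k j
    rw [hx'eq k, hx'eq j]
    by_cases hk : k = i <;> by_cases hj : j = i <;> simp [hk, hj] <;> ring
  have hsum : (∑ k, ∑ j, W k j * x' k * x' j)
      = (∑ k, ∑ j, W k j * x k * x j) + 2 * d * L₀ := by
    have h1 : ∀ k, (∑ j : Fin N, if j = i then W k i * x k * d else 0)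
        = W k i * x k * d := fun k => by simp
    have h2 : ∀ k, (∑ j : Fin N, if k = i then W i j * d * x j else 0)
        = (if k = i then d * L₀ else 0) := by
      intro k
      split
      · rw [hL0, Finset.mul_sum]
        exact Finset.sum_congr rfl fun j _ => by ring
      · simp
    have h3 : ∀ k, (∑ j : Fin N, if k = i then
        (if j = i then W i i * d * d else 0) else 0) = 0 := fun k => by
      simp [hdiag]
    simp only [hterm, Finset.sum_add_distrib, h1, h2, h3,
      Finset.sum_const_zero, Finset.sum_ite_eq', Finset.mem_univ, if_true,
      add_zero]
    have h4 : ∑ k, W k i * x k * d = d * L₀ := by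
      rw [hL0, Finset.mul_sum]
      refine Finset.sum_congr rfl fun k _ => ?_
      rw [hsymm k i]; ring
    rw [h4]; ring
  have hb : (∑ k, b k * x' k) = (∑ k, b k * x k) + d * b i := by
    simp only [hx'eq, mul_add, Finset.sum_add_distrib]
    congr 1
    simp [mul_comm, mul_ite, Finset.sum_ite_eq', mul_assoc]
  rw [hS, hS, hsum, hb]
  have key : 0 ≤ d * (L₀ + b i) := by
    rcases lt_trichotomy (L₀ + b i) 0 with h | h | h
    · have hxi' : x' i = 0 := hneg h
      have : d = -x i := by rw [hd, hxi']; ring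
      rcases hx i with h0 | h1
      · simp [this, h0]
      · rw [this, h1]; nlinarith
    · simp [h]
    · have hxi' : x' i = 1 := hpos h
      have : d = 1 - x i := by rw [hd, hxi']
      rcases hx i with h0 | h1
      · rw [this, h0]; nlinarith
      · simp [this, h1]
  have key' := key
  rw [mul_add] at key'
  clear_value d L₀
  linarith
end

section
/- Let G be a finite bipartite graph with variable nodes V (|V| = N) and constraint nodes C, and suppose G is a (γ, 1−ε) expander, i.e., every S ⊆ V with |S| ≤ γN satisfies |N(S)| ≥ (1−ε)|δ(S)|. Then every subset E ⊆ V with |E| ≤ γN has at least (1−2ε)|δ(E)| unique neighbors: |Unique(E)| ≥ (1−2ε)|δ(E)|. -/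
open Finset

open scoped Classical in
/-- **Expansion implies many unique neighbors.**
Let `G` be a finite bipartite graph with variable nodes `V` (`|V| = N`) and
constraint nodes `C`, and suppose `G` is a `(γ, 1-ε)` expander: every
`S ⊆ V` with `|S| ≤ γN` satisfies `|N(S)| ≥ (1-ε) |δ(S)|`.  Then every
`E ⊆ V` with `|E| ≤ γN` has at least `(1-2ε) |δ(E)|` unique neighbors. -/
theorem expander_unique_neighbors
    {V C : Type*} [Fintype V] [Fintype C] (Adj : V → C → Prop)
    (γ ε : ℝ) (hγ : 0 < γ) (hε : 0 ≤ ε)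
    (hexp : ∀ S : Finset V, (S.card : ℝ) ≤ γ * (Fintype.card V) →
      ((Finset.univ.filter (fun c : C => ∃ v ∈ S, Adj v c)).card : ℝ) ≥
        (1 - ε) * ((Finset.univ.filter (fun p : V × C => p.1 ∈ S ∧ Adj p.1 p.2)).card : ℝ))
    (E : Finset V) (hE : (E.card : ℝ) ≤ γ * (Fintype.card V)) :
    ((Finset.univ.filter (fun c : C => (E.filter (fun v => Adj v c)).card = 1)).card : ℝ) ≥
      (1 - 2 * ε) *
        ((Finset.univ.filter (fun p : V × C => p.1 ∈ E ∧ Adj p.1 p.2)).card : ℝ) := by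
  set U : Finset C := Finset.univ.filter (fun c : C => (E.filter (fun v => Adj v c)).card = 1)
    with hU
  set Nb : Finset C := Finset.univ.filter (fun c : C => ∃ v ∈ E, Adj v c) with hNb
  set D : Finset (V × C) := Finset.univ.filter (fun p : V × C => p.1 ∈ E ∧ Adj p.1 p.2)
    with hD
  -- edge count as sum of degrees
  have hsum : D.card = ∑ c : C, (E.filter (fun v => Adj v c)).card := by
    rw [Finset.card_eq_sum_card_fiberwise (f := Prod.snd) (t := Finset.univ)
      (fun x _ => Finset.mem_univ _)]
    refine Finset.sum_congr rfl (fun c _ => ?_)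
    apply Finset.card_nbij (fun p => p.1)
    · intro p hp
      simp only [hD, Finset.mem_coe, Finset.coe_filter, Set.mem_setOf_eq, Finset.mem_filter, Finset.mem_univ, true_and] at hp ⊢
      rcases hp with ⟨⟨h1, h2⟩, h3⟩
      exact ⟨h1, h3 ▸ h2⟩
    · intro p hp q hq hpq
      simp only [hD, Finset.mem_coe, Finset.mem_filter] at hp hq
      exact Prod.ext hpq (hp.2.trans hq.2.symm)
    · intro v hv
      simp only [Finset.coe_filter, Set.mem_setOf_eq] at hv
      exact ⟨(v, c), by simp [hD, hv.1, hv.2], rfl⟩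
  have hUN : U ⊆ Nb := by
    intro c hc
    simp only [hU, Finset.mem_filter, Finset.mem_univ, true_and] at hc
    have : (E.filter (fun v => Adj v c)).Nonempty := Finset.card_pos.1 (by omega)
    obtain ⟨v, hv⟩ := this
    simp only [Finset.mem_filter] at hv
    exact Finset.mem_filter.2 ⟨Finset.mem_univ _, v, hv.1, hv.2⟩
  -- key counting inequality: 2 |Nb| ≤ |D| + |U|
  have hkey : 2 * Nb.card ≤ D.card + U.card := by
    have h1 : ∑ c ∈ Nb, (E.filter (fun v => Adj v c)).card ≤ D.card := by
      rw [hsum]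
      exact Finset.sum_le_sum_of_subset (Finset.subset_univ _)
    have h2 : 2 * Nb.card ≤ (∑ c ∈ Nb, (E.filter (fun v => Adj v c)).card) + U.card := by
      have : ∀ c ∈ Nb, 2 ≤ (E.filter (fun v => Adj v c)).card + (if c ∈ U then 1 else 0) := by
        intro c hc
        simp only [hNb, Finset.mem_filter, Finset.mem_univ, true_and] at hc
        obtain ⟨v, hv, hadj⟩ := hc
        have hpos : 0 < (E.filter (fun v => Adj v c)).card :=
          Finset.card_pos.2 ⟨v, Finset.mem_filter.2 ⟨hv, hadj⟩⟩
        by_cases hcu : c ∈ U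
        · simp only [hcu, if_true]
          omega
        · simp only [hcu, if_false]
          simp only [hU, Finset.mem_filter, Finset.mem_univ, true_and] at hcu
          omega
      calc 2 * Nb.card = ∑ _c ∈ Nb, 2 := by simp [mul_comm]
        _ ≤ ∑ c ∈ Nb, ((E.filter (fun v => Adj v c)).card + (if c ∈ U then 1 else 0)) :=
            Finset.sum_le_sum this
        _ = (∑ c ∈ Nb, (E.filter (fun v => Adj v c)).card) + ∑ c ∈ Nb, (if c ∈ U then 1 else 0) := by
            rw [Finset.sum_add_distrib]
        _ ≤ (∑ c ∈ Nb, (E.filter (fun v => Adj v c)).card) + U.card := by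
            gcongr
            rw [Finset.sum_ite_mem]
            simp [Finset.inter_eq_right.2 hUN]
    omega
  have hexpE := hexp E hE
  have hkeyR : 2 * (Nb.card : ℝ) ≤ (D.card : ℝ) + (U.card : ℝ) := by
    exact_mod_cast hkey
  have hDnn : (0 : ℝ) ≤ (D.card : ℝ) := Nat.cast_nonneg _
  nlinarith [hexpE]
end

section
/- Let G be a finite bipartite graph with variable nodes V (|V| = N) and constraint nodes C that is a (γ, 1−ε) expander, and equip each constraint node c with a set A_c of satisfying local assignments (functions from the neighbors of c to {0,1}) such that any two distinct elements of A_c differ in at least two coordinates. Let Q_0 : V → {0,1} be a state satisfying every constraint, let Q : V → {0,1} differ from Q_0 exactly on a set E ⊆ V with |E| ≤ γN, and let U(E) be the set of constraints unsatisfied by Q. Then every unique neighbor of E is unsatisfied by Q, and hence |U(E)| ≥ (1−2ε)|δ(E)|. -/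
open Finset

open scoped Classical

section

variable {V C : Type*} [Fintype V] [Fintype C]

/-- `Q` satisfies constraint `c` if the restriction of `Q` to the neighbors of
`c` is one of the allowed local assignments `A c`. -/
def SatisfiesCon (Adj : V → C → Prop) (A : ∀ c : C, Set ({v : V // Adj v c} → Bool))
    (Q : V → Bool) (c : C) : Prop :=
  (fun v : {v : V // Adj v c} => Q v.1) ∈ A c

/-- **Unique neighbors of the error set are unsatisfied.**
Let `G` be a finite bipartite `(γ, 1-ε)` expander with variable nodes `V`
(`|V| = N`) and constraint nodes `C`, each constraint `c` carrying a set `A c`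
of satisfying local assignments, any two distinct elements of which differ in
at least two coordinates.  Let `Q₀` satisfy every constraint and let `Q`
differ from `Q₀` exactly on `E ⊆ V` with `|E| ≤ γN`, and let `U(E)` be the set
of constraints unsatisfied by `Q`.  Then every unique neighbor of `E` is
unsatisfied by `Q`, and hence `|U(E)| ≥ (1-2ε) |δ(E)|`. -/
theorem unique_neighbors_unsat_and_card_unsat_ge
    (Adj : V → C → Prop) (γ ε : ℝ) (hγ : 0 < γ) (hε : 0 ≤ ε)
    (hexp : ∀ S : Finset V, (S.card : ℝ) ≤ γ * (Fintype.card V) →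
      ((Finset.univ.filter (fun c : C => ∃ v ∈ S, Adj v c)).card : ℝ) ≥
        (1 - ε) * ((Finset.univ.filter (fun p : V × C => p.1 ∈ S ∧ Adj p.1 p.2)).card : ℝ))
    (A : ∀ c : C, Set ({v : V // Adj v c} → Bool))
    (hdist : ∀ c : C, ∀ f ∈ A c, ∀ g ∈ A c, f ≠ g →
      2 ≤ (Finset.univ.filter (fun v : {v : V // Adj v c} => f v ≠ g v)).card)
    (Q₀ Q : V → Bool) (hQ₀ : ∀ c : C, SatisfiesCon Adj A Q₀ c)
    (E : Finset V) (hQE : ∀ v : V, v ∈ E ↔ Q v ≠ Q₀ v)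
    (hE : (E.card : ℝ) ≤ γ * (Fintype.card V)) :
    (∀ c : C, (E.filter (fun v => Adj v c)).card = 1 → ¬ SatisfiesCon Adj A Q c) ∧
    ((Finset.univ.filter (fun c : C => ¬ SatisfiesCon Adj A Q c)).card : ℝ) ≥
      (1 - 2 * ε) *
        ((Finset.univ.filter (fun p : V × C => p.1 ∈ E ∧ Adj p.1 p.2)).card : ℝ) := by
  -- Part 1: unique neighbors are unsatisfied
  have part1 : ∀ c : C, (E.filter (fun v => Adj v c)).card = 1 →
      ¬ SatisfiesCon Adj A Q c := by
    intro c hc hsat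
    have hQ0c := hQ₀ c
    obtain ⟨v, hv⟩ := Finset.card_eq_one.mp hc
    have hvmem : v ∈ E.filter (fun v => Adj v c) := by rw [hv]; exact Finset.mem_singleton_self v
    have hvE : v ∈ E := (Finset.mem_filter.mp hvmem).1
    have hvAdj : Adj v c := (Finset.mem_filter.mp hvmem).2
    have hne : (fun w : {v : V // Adj v c} => Q₀ w.1) ≠ (fun w => Q w.1) := by
      intro h
      have := congrFun h ⟨v, hvAdj⟩
      exact ((hQE v).mp hvE) this.symm
    have h2 : 2 ≤ (Finset.univ.filter (fun w : {v : V // Adj v c} =>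
        Q₀ w.1 ≠ Q w.1)).card := hdist c _ hQ0c _ hsat hne
    have hle : (Finset.univ.filter (fun w : {v : V // Adj v c} =>
        Q₀ w.1 ≠ Q w.1)).card ≤ (E.filter (fun v => Adj v c)).card := by
      apply Finset.card_le_card_of_injOn (fun w => w.1)
      · intro w hw
        simp only [Finset.mem_coe, Finset.mem_filter, Finset.mem_univ, true_and] at hw
        refine Finset.mem_filter.mpr ⟨(hQE w.1).mpr (Ne.symm hw), w.2⟩
      · intro a _ b _ hab
        exact Subtype.ext hab
    omega
  refine ⟨part1, ?_⟩
  -- notation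
  set δ := Finset.univ.filter (fun p : V × C => p.1 ∈ E ∧ Adj p.1 p.2) with hδdef
  set NE := Finset.univ.filter (fun c : C => ∃ v ∈ E, Adj v c) with hNEdef
  set U1 := Finset.univ.filter (fun c : C => (E.filter (fun v => Adj v c)).card = 1) with hU1def
  set d := fun c : C => (E.filter (fun v => Adj v c)).card with hd
  -- δ.card = ∑ d c
  have hδ : δ.card = ∑ c : C, d c := by
    rw [Finset.card_eq_sum_card_fiberwise (f := Prod.snd) (t := Finset.univ)
      (fun p _ => Finset.mem_univ _)]
    refine Finset.sum_congr rfl (fun c _ => ?_)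
    apply Finset.card_bij (fun p _ => p.1)
    · intro p hp
      simp only [hδdef, Finset.mem_filter, Finset.mem_univ, true_and] at hp
      exact Finset.mem_filter.mpr ⟨hp.1.1, hp.2 ▸ hp.1.2⟩
    · intro p hp q hq hpq
      simp only [hδdef, Finset.mem_filter] at hp hq
      exact Prod.ext hpq (hp.2.trans hq.2.symm)
    · intro v hv
      simp only [Finset.mem_filter] at hv
      exact ⟨(v, c), by simp [hδdef, hv.1, hv.2], rfl⟩
  -- d c = 0 off NE
  have hsum : ∑ c : C, d c = ∑ c ∈ NE, d c := by
    symm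
    apply Finset.sum_subset (Finset.subset_univ _)
    intro c _ hc
    simp only [hNEdef, Finset.mem_filter, Finset.mem_univ, true_and, not_exists] at hc
    rw [hd]
    simp only [Finset.card_eq_zero, Finset.filter_eq_empty_iff]
    intro v hv
    exact fun h => hc v ⟨hv, h⟩
  have hU1sub : U1 ⊆ NE := by
    intro c hc
    simp only [hU1def, Finset.mem_filter, Finset.mem_univ, true_and] at hc
    have : (E.filter (fun v => Adj v c)).Nonempty := Finset.card_pos.mp (by omega)
    obtain ⟨v, hv⟩ := this
    simp only [Finset.mem_filter] at hv
    exact Finset.mem_filter.mpr ⟨Finset.mem_univ _, v, hv.1, hv.2⟩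
  -- key counting: 2 * NE.card ≤ δ.card + U1.card
  have hcount : 2 * NE.card ≤ δ.card + U1.card := by
    have h1 : ∀ c ∈ NE, 2 ≤ d c + (if c ∈ U1 then 1 else 0) := by
      intro c hc
      simp only [hNEdef, Finset.mem_filter, Finset.mem_univ, true_and] at hc
      obtain ⟨v, hvE, hvA⟩ := hc
      have hd1 : 1 ≤ d c := Finset.card_pos.mpr ⟨v, Finset.mem_filter.mpr ⟨hvE, hvA⟩⟩
      by_cases hcu : c ∈ U1
      · simp [hcu]; omega
      · rw [if_neg hcu]
        simp only [hU1def, Finset.mem_filter, Finset.mem_univ, true_and] at hcu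
        have h3 : d c ≠ 1 := hcu
        omega
    calc 2 * NE.card = ∑ c ∈ NE, 2 := by rw [Finset.sum_const]; ring
      _ ≤ ∑ c ∈ NE, (d c + if c ∈ U1 then 1 else 0) := Finset.sum_le_sum h1
      _ = (∑ c ∈ NE, d c) + ∑ c ∈ NE, (if c ∈ U1 then 1 else 0) := Finset.sum_add_distrib
      _ = δ.card + U1.card := by
          rw [hδ, hsum, Finset.sum_ite_mem, Finset.inter_eq_right.mpr hU1sub,
            Finset.sum_const, smul_eq_mul, mul_one]
  have hexpE := hexp E hE
  have hU1sub2 : U1 ⊆ Finset.univ.filter (fun c : C => ¬ SatisfiesCon Adj A Q c) := by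
    intro c hc
    simp only [hU1def, Finset.mem_filter, Finset.mem_univ, true_and] at hc
    exact Finset.mem_filter.mpr ⟨Finset.mem_univ _, part1 c hc⟩
  have hfin : (U1.card : ℝ) ≤
      ((Finset.univ.filter (fun c : C => ¬ SatisfiesCon Adj A Q c)).card : ℝ) :=
    Nat.cast_le.mpr (Finset.card_le_card hU1sub2)
  have hcountR : (2 : ℝ) * NE.card ≤ (δ.card : ℝ) + U1.card := by
    exact_mod_cast hcount
  have hεδ : (0:ℝ) ≤ (δ.card : ℝ) := Nat.cast_nonneg _
  nlinarith [hexpE, hcountR, hfin, hεδ, hε]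

end
end

section
/- Let G be a finite bipartite graph with variable nodes V (|V| = N) and constraint nodes C that is a (γ, 1−ε) expander with ε < 1/2, in which every variable node has degree at least 1, and equip each constraint node c with a set A_c of satisfying local assignments any two distinct elements of which differ in at least two coordinates. Then any two distinct states Q_0, Q_1 : V → {0,1} that both satisfy all constraints differ on more than γN variable nodes. -/
open Finset

open scoped Classical

section

variable {V C : Type*} [Fintype V] [Fintype C]

/-- **Satisfying states of an expander code are far apart.**
Let `G` be a finite bipartite `(γ, 1-ε)` expander with `ε < 1/2`, variable
nodes `V` (`|V| = N`, every variable of degree at least `1`) and constraint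
nodes `C`, each constraint `c` carrying a set `A c` of satisfying local
assignments any two distinct elements of which differ in at least two
coordinates.  Then any two distinct states `Q₀, Q₁ : V → {0,1}` that both
satisfy all constraints differ on more than `γN` variable nodes. -/
theorem satisfying_states_far_apart
    (Adj : V → C → Prop) (γ ε : ℝ) (hγ : 0 < γ) (hε0 : 0 ≤ ε) (hε : ε < 1/2)
    (hdeg : ∀ v : V, ∃ c : C, Adj v c)
    (hexp : ∀ S : Finset V, (S.card : ℝ) ≤ γ * (Fintype.card V) →
      ((Finset.univ.filter (fun c : C => ∃ v ∈ S, Adj v c)).card : ℝ) ≥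
        (1 - ε) * ((Finset.univ.filter (fun p : V × C => p.1 ∈ S ∧ Adj p.1 p.2)).card : ℝ))
    (A : ∀ c : C, Set ({v : V // Adj v c} → Bool))
    (hdist : ∀ c : C, ∀ f ∈ A c, ∀ g ∈ A c, f ≠ g →
      2 ≤ (Finset.univ.filter (fun v : {v : V // Adj v c} => f v ≠ g v)).card)
    (Q₀ Q₁ : V → Bool) (hQ₀ : ∀ c : C, SatisfiesCon Adj A Q₀ c)
    (hQ₁ : ∀ c : C, SatisfiesCon Adj A Q₁ c) (hne : Q₀ ≠ Q₁) :
    ((Finset.univ.filter (fun v : V => Q₀ v ≠ Q₁ v)).card : ℝ) >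
      γ * (Fintype.card V) := by
  by_contra hcon
  push_neg at hcon
  set S := Finset.univ.filter (fun v : V => Q₀ v ≠ Q₁ v) with hS
  set E := Finset.univ.filter (fun p : V × C => p.1 ∈ S ∧ Adj p.1 p.2) with hE
  set NS := Finset.univ.filter (fun c : C => ∃ v ∈ S, Adj v c) with hNS
  have hexpS : (NS.card : ℝ) ≥ (1 - ε) * E.card := hexp S hcon
  obtain ⟨v0, hv0⟩ : ∃ v, Q₀ v ≠ Q₁ v := Function.ne_iff.mp hne
  obtain ⟨c0, hc0⟩ := hdeg v0
  have hEpos : 0 < E.card := by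
    refine Finset.card_pos.mpr ⟨(v0, c0), ?_⟩
    simp [hE, hS, hv0, hc0]
  have hfiber : ∀ c ∈ NS, 2 ≤ (E.filter (fun p => p.2 = c)).card := by
    intro c hc
    simp only [hNS, Finset.mem_filter] at hc
    obtain ⟨-, v, hvS, hvc⟩ := hc
    have hfg : (fun v : {v : V // Adj v c} => Q₀ v.1) ≠
        (fun v : {v : V // Adj v c} => Q₁ v.1) := by
      intro h
      have := congrFun h ⟨v, hvc⟩
      simp only [hS, Finset.mem_filter] at hvS
      exact hvS.2 this
    have h2 := hdist c _ (hQ₀ c) _ (hQ₁ c) hfg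
    calc 2 ≤ (Finset.univ.filter (fun v : {v : V // Adj v c} =>
          (fun w : {v : V // Adj v c} => Q₀ w.1) v ≠
          (fun w : {v : V // Adj v c} => Q₁ w.1) v)).card := h2
      _ ≤ (E.filter (fun p => p.2 = c)).card := by
        apply Finset.card_le_card_of_injOn (fun v => (v.1, c))
        · intro x hx
          simp only [Finset.mem_coe, Finset.mem_filter, Finset.mem_univ, true_and] at hx
          simp [hE, hS, x.2, hx]
        · intro x hx y hy hxy
          exact Subtype.ext (congrArg Prod.fst hxy)
  have hsum : 2 * NS.card ≤ E.card := by
    have hcf := Finset.card_eq_sum_card_fiberwise (f := Prod.snd) (s := E)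
      (t := Finset.univ) (fun p _ => Finset.mem_univ _)
    rw [hcf]
    calc 2 * NS.card = ∑ _c ∈ NS, 2 := by
          rw [Finset.sum_const, smul_eq_mul, mul_comm]
      _ ≤ ∑ c ∈ NS, (E.filter (fun p => p.2 = c)).card := Finset.sum_le_sum hfiber
      _ ≤ ∑ c ∈ Finset.univ, (E.filter (fun p => p.2 = c)).card :=
        Finset.sum_le_sum_of_subset (Finset.subset_univ _)
  have h1 : (1:ℝ) ≤ E.card := by exact_mod_cast hEpos
  have h2 : (2:ℝ) * NS.card ≤ E.card := by exact_mod_cast hsum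
  have hNSpos : (0:ℝ) < NS.card := by nlinarith
  nlinarith

end
end

section
/- Let G be a finite bipartite graph with variable nodes V (|V| = N, every variable degree between z_min and z_max) and constraint nodes C that is a (γ, 1−ε) expander with ε ≤ 1/4, where γN is a positive integer, and equip each constraint node c with a set A_c of satisfying local assignments any two distinct elements of which differ in at least two coordinates. Let Q_0 satisfy every constraint, and let Q(0), Q(1), Q(2), … be a sequence of states such that consecutive states differ in exactly one variable node and the number of constraints unsatisfied by Q(t) is non-increasing in t. If Q(0) differs from Q_0 on fewer than (z_min/z_max)·(γN/2) variable nodes, then for every t, Q(t) differs from Q_0 on fewer than γN variable nodes. -/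
open Finset

open scoped Classical

section

variable {V C : Type*} [Fintype V] [Fintype C]

/-- The number of constraints unsatisfied by the state `Q`. -/
noncomputable def unsatCount (Adj : V → C → Prop)
    (A : ∀ c : C, Set ({v : V // Adj v c} → Bool)) (Q : V → Bool) : ℕ :=
  (Finset.univ.filter (fun c : C => ¬ SatisfiesCon Adj A Q c)).card

set_option linter.unusedSectionVars false

lemma aux_edge_sum_c (Adj : V → C → Prop) (S : Finset V) :
    (univ.filter (fun p : V × C => p.1 ∈ S ∧ Adj p.1 p.2)).card
      = ∑ c : C, (univ.filter (fun v : V => v ∈ S ∧ Adj v c)).card := by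
  simp only [Finset.card_filter]
  rw [Fintype.sum_prod_type]
  exact Finset.sum_comm

lemma aux_edge_sum_v (Adj : V → C → Prop) (S : Finset V) :
    (univ.filter (fun p : V × C => p.1 ∈ S ∧ Adj p.1 p.2)).card
      = ∑ v : V, (univ.filter (fun c : C => v ∈ S ∧ Adj v c)).card := by
  simp only [Finset.card_filter]
  rw [Fintype.sum_prod_type]

lemma aux_edge_eq_sum_deg (Adj : V → C → Prop) (S : Finset V) :
    (univ.filter (fun p : V × C => p.1 ∈ S ∧ Adj p.1 p.2)).card
      = ∑ v ∈ S, (univ.filter (fun c : C => Adj v c)).card := by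
  rw [aux_edge_sum_v]
  rw [← Finset.sum_filter_add_sum_filter_not univ (· ∈ S)]
  have h1 : ∀ v ∈ univ.filter (· ∈ S),
      (univ.filter (fun c : C => v ∈ S ∧ Adj v c)).card
        = (univ.filter (fun c : C => Adj v c)).card := by
    intro v hv
    simp only [mem_filter, mem_univ, true_and] at hv
    congr 1
    apply Finset.filter_congr
    intro c _
    simp [hv]
  have h2 : ∀ v ∈ univ.filter (fun v => ¬ v ∈ S),
      (univ.filter (fun c : C => v ∈ S ∧ Adj v c)).card = 0 := by
    intro v hv
    simp only [mem_filter, mem_univ, true_and] at hv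
    simp [Finset.filter_eq_empty_iff, hv]
  rw [Finset.sum_congr rfl h1, Finset.sum_congr rfl h2]
  simp [Finset.filter_univ_mem]

lemma aux_edge_lb (Adj : V → C → Prop) (S : Finset V) (z_min : ℕ)
    (hdeg : ∀ v : V, z_min ≤ (univ.filter (fun c : C => Adj v c)).card) :
    z_min * S.card ≤ (univ.filter (fun p : V × C => p.1 ∈ S ∧ Adj p.1 p.2)).card := by
  rw [aux_edge_eq_sum_deg]
  calc z_min * S.card = ∑ _v ∈ S, z_min := by rw [Finset.sum_const, mul_comm]; simp
  _ ≤ _ := Finset.sum_le_sum (fun v _ => hdeg v)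

lemma aux_edge_ub (Adj : V → C → Prop) (S : Finset V) (z_max : ℕ)
    (hdeg : ∀ v : V, (univ.filter (fun c : C => Adj v c)).card ≤ z_max) :
    (univ.filter (fun p : V × C => p.1 ∈ S ∧ Adj p.1 p.2)).card ≤ z_max * S.card := by
  rw [aux_edge_eq_sum_deg]
  calc ∑ v ∈ S, (univ.filter (fun c : C => Adj v c)).card ≤ ∑ _v ∈ S, z_max :=
        Finset.sum_le_sum (fun v _ => hdeg v)
  _ = z_max * S.card := by rw [Finset.sum_const, mul_comm]; simp

lemma aux_nbr_le_edge (Adj : V → C → Prop) (S : Finset V) :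
    (univ.filter (fun c : C => ∃ v ∈ S, Adj v c)).card
      ≤ (univ.filter (fun p : V × C => p.1 ∈ S ∧ Adj p.1 p.2)).card := by
  rw [aux_edge_sum_c]
  rw [Finset.card_filter]
  apply Finset.sum_le_sum
  intro c _
  by_cases h : ∃ v ∈ S, Adj v c
  · simp only [h, if_true]
    obtain ⟨v, hv, ha⟩ := h
    exact Finset.card_pos.mpr ⟨v, by simp [hv, ha]⟩
  · simp [h]

lemma aux_unique (Adj : V → C → Prop) (S : Finset V) :
    2 * (univ.filter (fun c : C => ∃ v ∈ S, Adj v c)).card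
      ≤ (univ.filter (fun p : V × C => p.1 ∈ S ∧ Adj p.1 p.2)).card
        + (univ.filter (fun c : C =>
            (univ.filter (fun v : V => v ∈ S ∧ Adj v c)).card = 1)).card := by
  rw [aux_edge_sum_c]
  simp only [Finset.card_filter, Finset.mul_sum, ← Finset.sum_add_distrib]
  apply Finset.sum_le_sum
  intro c _
  by_cases h : ∃ v ∈ S, Adj v c
  · have h1 : 1 ≤ (univ.filter (fun v : V => v ∈ S ∧ Adj v c)).card := by
      obtain ⟨v, hv, ha⟩ := h
      exact Finset.card_pos.mpr ⟨v, by simp [hv, ha]⟩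
    simp only [h, if_true, ← Finset.card_filter]
    split <;> omega
  · simp [h]

lemma aux_card_subtype (Adj : V → C → Prop) (Q' Q₀ : V → Bool) (c : C) :
    (univ.filter (fun w : {v : V // Adj v c} => Q' w.1 ≠ Q₀ w.1)).card
      = (univ.filter (fun v : V => (Q' v ≠ Q₀ v) ∧ Adj v c)).card := by
  apply Finset.card_bij (fun w _ => w.1)
  · intro w hw
    simp only [mem_filter, mem_univ, true_and] at hw ⊢
    exact ⟨hw, w.2⟩
  · intro a _ b _ h
    exact Subtype.ext h
  · intro v hv
    simp only [mem_filter, mem_univ, true_and] at hv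
    exact ⟨⟨v, hv.2⟩, by simp [hv.1], rfl⟩

lemma aux_unique_unsat (Adj : V → C → Prop) (A : ∀ c : C, Set ({v : V // Adj v c} → Bool))
    (hdist : ∀ c : C, ∀ f ∈ A c, ∀ g ∈ A c, f ≠ g →
      2 ≤ (univ.filter (fun v : {v : V // Adj v c} => f v ≠ g v)).card)
    (Q₀ : V → Bool) (hQ₀ : ∀ c : C, SatisfiesCon Adj A Q₀ c)
    (Q' : V → Bool) (c : C)
    (h1 : (univ.filter (fun v : V => (Q' v ≠ Q₀ v) ∧ Adj v c)).card = 1) :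
    ¬ SatisfiesCon Adj A Q' c := by
  intro hsat
  have hc : (univ.filter (fun w : {v : V // Adj v c} => Q' w.1 ≠ Q₀ w.1)).card = 1 :=
    (aux_card_subtype Adj Q' Q₀ c).trans h1
  have hne : (fun w : {v : V // Adj v c} => Q' w.1) ≠ (fun w => Q₀ w.1) := by
    obtain ⟨w, hw⟩ := Finset.card_pos.mp (by rw [hc]; norm_num)
    simp only [mem_filter, mem_univ, true_and] at hw
    intro heq
    exact hw (congrFun heq w)
  have := hdist c _ hsat _ (hQ₀ c) hne
  omega

lemma aux_unsat_nbr (Adj : V → C → Prop) (A : ∀ c : C, Set ({v : V // Adj v c} → Bool))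
    (Q₀ : V → Bool) (hQ₀ : ∀ c : C, SatisfiesCon Adj A Q₀ c)
    (Q' : V → Bool) (c : C) (hc : ¬ SatisfiesCon Adj A Q' c) :
    ∃ v, (Q' v ≠ Q₀ v) ∧ Adj v c := by
  by_contra h
  push_neg at h
  apply hc
  have heq : (fun w : {v : V // Adj v c} => Q' w.1) = (fun w => Q₀ w.1) := by
    funext w
    by_contra hne
    exact h w.1 hne w.2
  unfold SatisfiesCon
  rw [heq]
  exact hQ₀ c

set_option maxHeartbeats 1000000 in
/-- **Monotone single-flip dynamics stay inside the expansion radius.**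
Let `G` be a finite bipartite `(γ, 1-ε)` expander with `ε ≤ 1/4`, variable
nodes `V` (`|V| = N`, each variable of degree between `z_min` and `z_max`) and
constraint nodes `C`, where `γN` is a positive integer, and equip each
constraint node `c` with a set `A c` of satisfying local assignments any two
distinct elements of which differ in at least two coordinates.  Let `Q₀`
satisfy every constraint, and let `Q 0, Q 1, Q 2, …` be states such that
consecutive states differ in exactly one variable node and the number of
unsatisfied constraints is non-increasing.  If `Q 0` differs from `Q₀` on
fewer than `(z_min/z_max) * (γN/2)` variable nodes, then for every `t`,
`Q t` differs from `Q₀` on fewer than `γN` variable nodes. -/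
theorem monotone_dynamics_stay_close
    (Adj : V → C → Prop) (γ ε : ℝ) (hγ : 0 < γ) (hε0 : 0 ≤ ε) (hε : ε ≤ 1/4)
    (hγN : ∃ m : ℕ, 0 < m ∧ (m : ℝ) = γ * (Fintype.card V))
    (z_min z_max : ℕ)
    (hdeg : ∀ v : V, z_min ≤ (Finset.univ.filter (fun c : C => Adj v c)).card ∧
      (Finset.univ.filter (fun c : C => Adj v c)).card ≤ z_max)
    (hexp : ∀ S : Finset V, (S.card : ℝ) ≤ γ * (Fintype.card V) →
      ((Finset.univ.filter (fun c : C => ∃ v ∈ S, Adj v c)).card : ℝ) ≥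
        (1 - ε) * ((Finset.univ.filter (fun p : V × C => p.1 ∈ S ∧ Adj p.1 p.2)).card : ℝ))
    (A : ∀ c : C, Set ({v : V // Adj v c} → Bool))
    (hdist : ∀ c : C, ∀ f ∈ A c, ∀ g ∈ A c, f ≠ g →
      2 ≤ (Finset.univ.filter (fun v : {v : V // Adj v c} => f v ≠ g v)).card)
    (Q₀ : V → Bool) (hQ₀ : ∀ c : C, SatisfiesCon Adj A Q₀ c)
    (Q : ℕ → V → Bool)
    (hstep : ∀ t : ℕ,
      (Finset.univ.filter (fun v : V => Q t v ≠ Q (t+1) v)).card = 1)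
    (hmono : ∀ t : ℕ, unsatCount Adj A (Q (t+1)) ≤ unsatCount Adj A (Q t))
    (hinit : ((Finset.univ.filter (fun v : V => Q 0 v ≠ Q₀ v)).card : ℝ) <
      ((z_min : ℝ) / z_max) * (γ * (Fintype.card V) / 2)) :
    ∀ t : ℕ, ((Finset.univ.filter (fun v : V => Q t v ≠ Q₀ v)).card : ℝ) <
      γ * (Fintype.card V) := by
  obtain ⟨m, hm0, hmeq⟩ := hγN
  have hNpos : 0 < Fintype.card V := by
    by_contra h
    have h0 : (Fintype.card V : ℝ) = 0 := by
      have : Fintype.card V = 0 := by omega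
      exact_mod_cast this
    rw [h0, mul_zero] at hmeq
    have : m = 0 := by exact_mod_cast hmeq
    omega
  obtain ⟨v0⟩ : Nonempty V := Fintype.card_pos_iff.mp hNpos
  have hzz : z_min ≤ z_max := le_trans (hdeg v0).1 (hdeg v0).2
  have hzmax : 0 < z_max := by
    rcases Nat.eq_zero_or_pos z_max with h | h
    · exfalso
      have hz1 : z_min = 0 := by omega
      rw [h, hz1] at hinit
      norm_num at hinit
      exact absurd hinit (not_lt.mpr (Nat.cast_nonneg _))
    · exact h
  have hzmaxR : (0:ℝ) < z_max := by exact_mod_cast hzmax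
  have hzzR : (z_min:ℝ) ≤ z_max := by exact_mod_cast hzz
  have hmR : (0:ℝ) < m := by exact_mod_cast hm0
  rw [← hmeq] at hinit
  have hinit' : ((univ.filter (fun v : V => Q 0 v ≠ Q₀ v)).card : ℝ) * z_max
      < (z_min : ℝ) * ((m:ℝ)/2) := by
    rw [div_mul_eq_mul_div] at hinit
    exact (lt_div_iff₀ hzmaxR).mp hinit
  have humono : ∀ t, unsatCount Adj A (Q t) ≤ unsatCount Adj A (Q 0) := by
    intro t
    induction t with
    | zero => exact le_refl _
    | succ n ih => exact le_trans (hmono n) ih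
  have hu0 : unsatCount Adj A (Q 0) ≤ z_max * (univ.filter (fun v : V => Q 0 v ≠ Q₀ v)).card := by
    have hsub : univ.filter (fun c : C => ¬ SatisfiesCon Adj A (Q 0) c)
        ⊆ univ.filter (fun c : C => ∃ v ∈ univ.filter (fun v : V => Q 0 v ≠ Q₀ v), Adj v c) := by
      intro c hc
      simp only [mem_filter, mem_univ, true_and] at hc ⊢
      obtain ⟨v, hv, ha⟩ := aux_unsat_nbr Adj A Q₀ hQ₀ (Q 0) c hc
      exact ⟨v, by simp [hv], ha⟩
    have s1 : unsatCount Adj A (Q 0)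
        ≤ (univ.filter (fun c : C =>
            ∃ v ∈ univ.filter (fun v : V => Q 0 v ≠ Q₀ v), Adj v c)).card :=
      Finset.card_le_card hsub
    have s2 := aux_nbr_le_edge Adj (univ.filter (fun v : V => Q 0 v ≠ Q₀ v))
    have s3 := aux_edge_ub Adj (univ.filter (fun v : V => Q 0 v ≠ Q₀ v)) z_max
      (fun v => (hdeg v).2)
    have s2' : (univ.filter (fun c : C =>
            ∃ v ∈ univ.filter (fun v : V => Q 0 v ≠ Q₀ v), Adj v c)).card
        ≤ (univ.filter (fun p : V × C =>
            p.1 ∈ univ.filter (fun v : V => Q 0 v ≠ Q₀ v) ∧ Adj p.1 p.2)).card := by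
      convert s2 using 3
    exact le_trans s1 (le_trans s2' s3)
  have main : ∀ t, (univ.filter (fun v : V => Q t v ≠ Q₀ v)).card < m := by
    intro t
    induction t with
    | zero =>
      have h1 : ((univ.filter (fun v : V => Q 0 v ≠ Q₀ v)).card : ℝ) < m := by
        have h2 : ((univ.filter (fun v : V => Q 0 v ≠ Q₀ v)).card : ℝ) * z_max
            < (z_max : ℝ) * ((m:ℝ)/2) :=
          lt_of_lt_of_le hinit' (mul_le_mul_of_nonneg_right hzzR (by positivity))
        nlinarith
      exact_mod_cast h1
    | succ n ih =>
      have hsub : univ.filter (fun v : V => Q (n+1) v ≠ Q₀ v)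
          ⊆ univ.filter (fun v : V => Q n v ≠ Q₀ v)
            ∪ univ.filter (fun v : V => Q n v ≠ Q (n+1) v) := by
        intro v hv
        simp only [mem_filter, mem_union, mem_univ, true_and] at hv ⊢
        by_cases h : Q n v = Q (n+1) v
        · exact Or.inl (h ▸ hv)
        · exact Or.inr h
      have hle : (univ.filter (fun v : V => Q (n+1) v ≠ Q₀ v)).card ≤ m := by
        have h1 := Finset.card_le_card hsub
        have h2 := Finset.card_union_le (univ.filter (fun v : V => Q n v ≠ Q₀ v))
          (univ.filter (fun v : V => Q n v ≠ Q (n+1) v))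
        have h3 := hstep n
        omega
      rcases Nat.lt_or_ge (univ.filter (fun v : V => Q (n+1) v ≠ Q₀ v)).card m with h | h
      · exact h
      exfalso
      have hScard : (univ.filter (fun v : V => Q (n+1) v ≠ Q₀ v)).card = m :=
        le_antisymm hle h
      set S := univ.filter (fun v : V => Q (n+1) v ≠ Q₀ v) with hS
      have hexpS := hexp S (by rw [hScard]; exact le_of_eq hmeq)
      have hE1 : z_min * m
          ≤ (univ.filter (fun p : V × C => p.1 ∈ S ∧ Adj p.1 p.2)).card := by
        have := aux_edge_lb Adj S z_min (fun v => (hdeg v).1)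
        rwa [hScard] at this
      have hU2 := aux_unique Adj S
      have hUu : (univ.filter (fun c : C =>
            (univ.filter (fun v : V => v ∈ S ∧ Adj v c)).card = 1)).card
          ≤ unsatCount Adj A (Q (n+1)) := by
        apply Finset.card_le_card
        intro c hc
        simp only [mem_filter, mem_univ, true_and] at hc ⊢
        apply aux_unique_unsat Adj A hdist Q₀ hQ₀ (Q (n+1)) c
        have heq : (univ.filter (fun v : V => (Q (n+1) v ≠ Q₀ v) ∧ Adj v c))
            = (univ.filter (fun v : V => v ∈ S ∧ Adj v c)) := by
          apply Finset.filter_congr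
          intro v _
          simp [hS]
        rw [heq]
        exact hc
      have c1 : (z_min:ℝ) * m
          ≤ ((univ.filter (fun p : V × C => p.1 ∈ S ∧ Adj p.1 p.2)).card : ℝ) := by
        exact_mod_cast hE1
      have c3 : ((univ.filter (fun p : V × C => p.1 ∈ S ∧ Adj p.1 p.2)).card : ℝ)
            + ((univ.filter (fun c : C =>
                (univ.filter (fun v : V => v ∈ S ∧ Adj v c)).card = 1)).card : ℝ)
          ≥ 2 * ((univ.filter (fun c : C => ∃ v ∈ S, Adj v c)).card : ℝ) := by
        exact_mod_cast hU2
      have c4 : ((univ.filter (fun c : C =>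
            (univ.filter (fun v : V => v ∈ S ∧ Adj v c)).card = 1)).card : ℝ)
          ≤ (z_max : ℝ) * ((univ.filter (fun v : V => Q 0 v ≠ Q₀ v)).card : ℝ) := by
        exact_mod_cast le_trans hUu (le_trans (humono (n+1)) hu0)
      have hEnn : (0:ℝ) ≤ ((univ.filter (fun p : V × C => p.1 ∈ S ∧ Adj p.1 p.2)).card : ℝ) :=
        Nat.cast_nonneg _
      nlinarith [hexpS, mul_nonneg hEnn (by linarith : (0:ℝ) ≤ 1/4 - ε)]
  intro t
  rw [← hmeq]
  exact_mod_cast main t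

end
end

section
/- For k ≥ 2, consider the bipartite graph of the length-(2^k − 1) Hamming code, with variable nodes {1, …, 2^k − 1} and constraint nodes {0, …, k−1}, where variable i is adjacent to constraint j if and only if bit j of the binary expansion of i equals 1. Let Ŝ be the set of variables whose binary expansion has exactly k−1 ones. Then |Ŝ| = k, each element of Ŝ has degree k−1 so that |δ(Ŝ)| = k(k−1), and N(Ŝ) is the full set of k constraint nodes; hence the expansion ratio satisfies |N(Ŝ)|/|δ(Ŝ)| = 1/(k−1), which tends to 0 as k → ∞. -/
open Finset

section Aux
variable (k : ℕ)

/-- auxiliary: the number with all bits `< k` set except bit `m`. -/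
def hammN (m : ℕ) : ℕ := (2 ^ k - 1) ^^^ 2 ^ m

lemma hammN_lt (hk : 2 ≤ k) {m : ℕ} (hm : m < k) : hammN k m < 2 ^ k :=
  Nat.xor_lt_two_pow (by have := Nat.one_lt_two_pow_iff (n := k); omega)
    (Nat.pow_lt_pow_right one_lt_two hm)

lemma hammN_testBit (m j : ℕ) (hj : j < k) :
    (hammN k m).testBit j = !decide (m = j) := by
  simp [hammN, Nat.testBit_xor, Nat.testBit_two_pow_sub_one, Nat.testBit_two_pow, hj]

lemma hammN_testBit_high (m j : ℕ) (hm : m < k) (hj : k ≤ j) :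
    (hammN k m).testBit j = false := by
  simp only [hammN, Nat.testBit_xor, Nat.testBit_two_pow_sub_one, Nat.testBit_two_pow]
  have h1 : ¬ j < k := by omega
  have h2 : m ≠ j := by omega
  simp [h1, h2]

lemma hammN_pos (hk : 2 ≤ k) {m : ℕ} (hm : m < k) : 1 ≤ hammN k m := by
  rcases Nat.eq_zero_or_pos (hammN k m) with h | h
  · exfalso
    set j : ℕ := if m = 0 then 1 else 0 with hjdef
    have hj : j < k := by rw [hjdef]; split <;> omega
    have hmj : m ≠ j := by rw [hjdef]; split <;> omega
    have := hammN_testBit k m j hj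
    rw [h] at this
    simp [hmj] at this
  · exact h

lemma hammN_inj : Function.Injective (hammN k) := by
  intro a b h
  have h2 : (2:ℕ) ^ a = 2 ^ b := by
    have := congrArg (fun x => (2 ^ k - 1) ^^^ x) h
    simpa [hammN] using this
  exact Nat.pow_right_injective le_rfl h2

variable {k}

/-- the corresponding element of `Fin (2^k - 1)`. -/
def hammF (hk : 2 ≤ k) (m : Fin k) : Fin (2 ^ k - 1) :=
  ⟨hammN k m.val - 1, by
    have h1 := hammN_lt k hk m.isLt
    have h2 := hammN_pos k hk m.isLt
    omega⟩

lemma hammF_val_succ (hk : 2 ≤ k) (m : Fin k) :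
    (hammF hk m).val + 1 = hammN k m.val := by
  have h2 := hammN_pos k hk m.isLt
  simp only [hammF]
  omega

lemma hammF_filter_eq (hk : 2 ≤ k) (m : Fin k) :
    (univ.filter (fun j : Fin k => Nat.testBit ((hammF hk m).val + 1) j.val))
      = univ.erase m := by
  ext j
  simp only [mem_filter, mem_univ, true_and, mem_erase, and_true]
  rw [hammF_val_succ hk m, hammN_testBit k m.val j.val j.isLt]
  simp only [Bool.not_eq_true', decide_eq_false_iff_not, ne_eq, Fin.ext_iff]
  omega

lemma hammF_mem (hk : 2 ≤ k) (m : Fin k) :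
    (univ.filter (fun j : Fin k => Nat.testBit ((hammF hk m).val + 1) j.val)).card
      = k - 1 := by
  rw [hammF_filter_eq hk m, card_erase_of_mem (mem_univ m), card_univ, Fintype.card_fin]

lemma hammF_inj (hk : 2 ≤ k) : Function.Injective (hammF hk) := by
  intro a b h
  have : hammN k a.val = hammN k b.val := by
    rw [← hammF_val_succ hk a, ← hammF_val_succ hk b, h]
  exact Fin.ext (hammN_inj k this)

lemma hammS_eq (hk : 2 ≤ k) :
    (Finset.univ.filter (fun i : Fin (2 ^ k - 1) =>
        (Finset.univ.filter (fun j : Fin k => Nat.testBit (i.val + 1) j.val)).card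
          = k - 1)) = Finset.image (hammF hk) univ := by
  ext i
  simp only [mem_filter, mem_univ, true_and, mem_image]
  constructor
  · intro hcard
    -- the complement filter has exactly one element
    have hsum := card_filter_add_card_filter_not
      (s := (univ : Finset (Fin k)))
      (p := fun j : Fin k => Nat.testBit (i.val + 1) j.val)
    rw [hcard, card_univ, Fintype.card_fin] at hsum
    have hone : (univ.filter (fun j : Fin k => ¬ Nat.testBit (i.val + 1) j.val)).card = 1 := by
      omega
    obtain ⟨m, hm⟩ := card_eq_one.mp hone
    have hiff : ∀ j : Fin k, (¬ Nat.testBit (i.val + 1) j.val) ↔ j = m := by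
      intro j
      constructor
      · intro hj
        have : j ∈ univ.filter (fun j : Fin k => ¬ Nat.testBit (i.val + 1) j.val) := by
          simp [hj]
        rw [hm] at this
        simpa using this
      · intro hj
        have : m ∈ univ.filter (fun j : Fin k => ¬ Nat.testBit (i.val + 1) j.val) := by
          rw [hm]; simp
        rw [hj]
        simpa using this
    refine ⟨m, ?_⟩
    have hval : i.val + 1 = hammN k m.val := by
      apply Nat.eq_of_testBit_eq
      intro j
      by_cases hj : j < k
      · rw [hammN_testBit k m.val j hj]
        by_cases hjm : (⟨j, hj⟩ : Fin k) = m
        · have h1 : ¬ Nat.testBit (i.val + 1) j := (hiff ⟨j, hj⟩).mpr hjm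
          have h2 : m.val = j := by rw [← hjm]
          simp [h1, h2, Bool.eq_false_iff.mpr h1]
        · have h1 : Nat.testBit (i.val + 1) j := by
            by_contra hc
            exact hjm ((hiff ⟨j, hj⟩).mp hc)
          have h2 : m.val ≠ j := by
            intro hc
            exact hjm (Fin.ext hc.symm)
          simp [h1, h2]
      · have hle : 2 ^ k ≤ 2 ^ j := Nat.pow_le_pow_right (by norm_num) (by omega)
        have hlt : i.val + 1 < 2 ^ j := by
          have := i.isLt
          omega
        rw [Nat.testBit_lt_two_pow hlt, hammN_testBit_high k m.val j m.isLt (by omega)]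
    apply Fin.ext
    simp only [hammF]
    omega
  · rintro ⟨m, rfl⟩
    exact hammF_mem hk m

end Aux
/-- **The Hamming code bipartite graph is not an expander.**
For `k ≥ 2`, consider the bipartite graph of the length-`2^k - 1` Hamming
code: variable nodes `i : Fin (2^k - 1)` (standing for the integers
`i + 1 ∈ {1, …, 2^k - 1}`) and constraint nodes `j : Fin k`, with `i` adjacent
to `j` iff bit `j` of `i + 1` equals `1`.  Let `Ŝ` be the set of variables
whose binary expansion has exactly `k - 1` ones.  Then `|Ŝ| = k`, each element
of `Ŝ` has degree `k - 1` so that `|δ(Ŝ)| = k (k-1)`, and `N(Ŝ)` is the full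
set of `k` constraint nodes; hence the expansion ratio satisfies
`|N(Ŝ)| / |δ(Ŝ)| = 1 / (k - 1)`, which tends to `0` as `k → ∞`. -/
theorem hamming_graph_expansion_vanishes (k : ℕ) (hk : 2 ≤ k) :
    (Finset.univ.filter (fun i : Fin (2 ^ k - 1) =>
        (Finset.univ.filter (fun j : Fin k => Nat.testBit (i.val + 1) j.val)).card
          = k - 1)).card = k ∧
    (∀ i ∈ Finset.univ.filter (fun i : Fin (2 ^ k - 1) =>
        (Finset.univ.filter (fun j : Fin k => Nat.testBit (i.val + 1) j.val)).card
          = k - 1),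
      (Finset.univ.filter (fun j : Fin k => Nat.testBit (i.val + 1) j.val)).card
        = k - 1) ∧
    (Finset.univ.filter (fun p : Fin (2 ^ k - 1) × Fin k =>
        p.1 ∈ Finset.univ.filter (fun i : Fin (2 ^ k - 1) =>
          (Finset.univ.filter (fun j : Fin k => Nat.testBit (i.val + 1) j.val)).card
            = k - 1) ∧
        Nat.testBit (p.1.val + 1) p.2.val)).card = k * (k - 1) ∧
    (Finset.univ.filter (fun j : Fin k =>
        ∃ i ∈ Finset.univ.filter (fun i : Fin (2 ^ k - 1) =>
          (Finset.univ.filter (fun j' : Fin k => Nat.testBit (i.val + 1) j'.val)).card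
            = k - 1),
          Nat.testBit (i.val + 1) j.val) : Finset (Fin k)) = Finset.univ ∧
    ((Finset.univ.filter (fun j : Fin k =>
        ∃ i ∈ Finset.univ.filter (fun i : Fin (2 ^ k - 1) =>
          (Finset.univ.filter (fun j' : Fin k => Nat.testBit (i.val + 1) j'.val)).card
            = k - 1),
          Nat.testBit (i.val + 1) j.val)).card : ℝ) /
      ((Finset.univ.filter (fun p : Fin (2 ^ k - 1) × Fin k =>
        p.1 ∈ Finset.univ.filter (fun i : Fin (2 ^ k - 1) =>
          (Finset.univ.filter (fun j : Fin k => Nat.testBit (i.val + 1) j.val)).card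
            = k - 1) ∧
        Nat.testBit (p.1.val + 1) p.2.val)).card : ℝ) = 1 / ((k : ℝ) - 1) ∧
    Filter.Tendsto (fun m : ℕ => 1 / ((m : ℝ) - 1)) Filter.atTop (nhds 0) := by
  classical
  set S : Finset (Fin (2 ^ k - 1)) := Finset.univ.filter (fun i : Fin (2 ^ k - 1) =>
      (Finset.univ.filter (fun j : Fin k => Nat.testBit (i.val + 1) j.val)).card
        = k - 1) with hSdef
  -- cardinality of S
  have hScard : S.card = k := by
    rw [hSdef, hammS_eq hk, card_image_of_injective _ (hammF_inj hk), card_univ,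
      Fintype.card_fin]
  have hdeg : ∀ i ∈ S,
      (Finset.univ.filter (fun j : Fin k => Nat.testBit (i.val + 1) j.val)).card = k - 1 := by
    intro i hi
    rw [hSdef] at hi
    exact (mem_filter.mp hi).2
  -- edge count
  have hEcard : (Finset.univ.filter (fun p : Fin (2 ^ k - 1) × Fin k =>
      p.1 ∈ S ∧ Nat.testBit (p.1.val + 1) p.2.val)).card = k * (k - 1) := by
    have hEeq : (Finset.univ.filter (fun p : Fin (2 ^ k - 1) × Fin k =>
        p.1 ∈ S ∧ Nat.testBit (p.1.val + 1) p.2.val))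
        = S.biUnion (fun i => ({i} : Finset (Fin (2 ^ k - 1))) ×ˢ
            (Finset.univ.filter (fun j : Fin k => Nat.testBit (i.val + 1) j.val))) := by
      ext p
      simp only [mem_filter, mem_univ, true_and, mem_biUnion, mem_product, mem_singleton]
      constructor
      · rintro ⟨h1, h2⟩
        exact ⟨p.1, h1, rfl, h2⟩
      · rintro ⟨i, hi, h1, h2⟩
        rw [h1]
        exact ⟨hi, h2⟩
    rw [hEeq, card_biUnion]
    · have : ∀ i ∈ S, (({i} : Finset (Fin (2 ^ k - 1))) ×ˢ
          (Finset.univ.filter (fun j : Fin k => Nat.testBit (i.val + 1) j.val))).card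
            = k - 1 := by
        intro i hi
        rw [card_product, card_singleton, one_mul]
        exact hdeg i hi
      rw [Finset.sum_congr rfl this, Finset.sum_const, hScard, smul_eq_mul]
    · intro i hi i' hi' hne
      rw [Function.onFun, Finset.disjoint_left]
      rintro p hp hp'
      rw [mem_product, mem_singleton] at hp hp'
      exact hne (hp.1 ▸ hp'.1 ▸ rfl)
  -- neighborhood is everything
  have hN : (Finset.univ.filter (fun j : Fin k =>
      ∃ i ∈ S, Nat.testBit (i.val + 1) j.val) : Finset (Fin k)) = Finset.univ := by
    apply Finset.eq_univ_iff_forall.mpr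
    intro j
    simp only [mem_filter, mem_univ, true_and]
    set m : Fin k := if j.val = 0 then ⟨1, by omega⟩ else ⟨0, by omega⟩ with hmdef
    have hmj : m.val ≠ j.val := by
      rw [hmdef]; split <;> simp <;> omega
    refine ⟨hammF hk m, ?_, ?_⟩
    · rw [hSdef, hammS_eq hk]
      exact mem_image_of_mem _ (mem_univ m)
    · rw [hammF_val_succ hk m, hammN_testBit k m.val j.val j.isLt]
      simp [hmj]
  refine ⟨hScard, hdeg, hEcard, hN, ?_, ?_⟩
  · rw [hN, hEcard, card_univ, Fintype.card_fin]
    have h1 : (k : ℝ) ≠ 0 := by positivity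
    have h2 : (k : ℝ) - 1 ≠ 0 := by
      have : (2 : ℝ) ≤ (k : ℝ) := by exact_mod_cast hk
      nlinarith
    rw [Nat.cast_mul, Nat.cast_sub (by omega : 1 ≤ k), Nat.cast_one]
    field_simp
  · have h1 : Filter.Tendsto (fun m : ℕ => (m : ℝ) - 1) Filter.atTop Filter.atTop := by
      simpa [sub_eq_add_neg] using
        Filter.tendsto_atTop_add_const_right Filter.atTop (-1 : ℝ)
          (tendsto_natCast_atTop_atTop (R := ℝ))
    simpa [one_div, Function.comp_def] using tendsto_inv_atTop_zero.comp h1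
end
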